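/- Let G be a connected loopless multigraph on a finite vertex set V, with spanning simple graph G̃ = (V, Ẽ). Then the coefficient of t^{|V|−2} in the Laurent polynomial T_G(−t,−1/t) equals (−1)^{|V|−1} · (|V| − 1 − |Ẽ|); in particular its absolute value is |Ẽ| + 1 − |V|. -/

import Mathlib

open LaurentPolynomial Finset

/-- Number of connected components of the simple graph on `V` with edge set `s`
(isolated vertices count as components). -/
noncomputable def numComponents (V : Type*) (s : Set (Sym2 V)) : ℕ :=
  Nat.card (SimpleGraph.fromEdgeSet s).ConnectedComponent

/-- The evaluation `T_G(-t, -1/t)` of the Tutte polynomial of the multigraph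
given by `ε : E → Sym2 V`, as a Laurent polynomial in `ℤ[t,t⁻¹]`. -/
noncomputable def tutteEval {V E : Type*} [Fintype V] [Fintype E]
    (ε : E → Sym2 V) : LaurentPolynomial ℤ :=
  ∑ F : Finset E,
    (-T 1 - 1) ^ (numComponents V (ε '' ↑F) - numComponents V (Set.range ε)) *
      (-T (-1) - 1) ^ (F.card + numComponents V (ε '' ↑F) - Fintype.card V)

/-- `P(m) = 1 - t⁻¹ + t⁻² - ⋯ ± t^{-(m-1)}`. -/
noncomputable def Ppoly (m : ℕ) : LaurentPolynomial ℤ :=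
  ∑ i ∈ Finset.range m, (-T (-1)) ^ i

section
variable {V E : Type*} [Fintype V] [DecidableEq V] [Fintype E]

/-- The edge set of the spanning simple graph of the multigraph `ε : E → Sym2 V`. -/
noncomputable def spanningEdges (ε : E → Sym2 V) : Finset (Sym2 V) :=
  Finset.image ε Finset.univ

/-- The multiplicity of an edge `e` of the spanning simple graph. -/
noncomputable def edgeMult (ε : E → Sym2 V) (e : Sym2 V) : ℕ :=
  Nat.card {f : E // ε f = e}

/-- `n(j)`: the number of edges of the spanning simple graph of multiplicity `≥ j`. -/
noncomputable def nMult (ε : E → Sym2 V) (j : ℕ) : ℕ :=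
  Nat.card {e : Sym2 V // e ∈ spanningEdges ε ∧ j ≤ edgeMult ε e}

/-- The number of triangles in the spanning simple graph. -/
noncomputable def numTriangles (ε : E → Sym2 V) : ℕ :=
  Nat.card {s : Finset V // s.card = 3 ∧
    ∀ u ∈ s, ∀ v ∈ s, u ≠ v → s(u, v) ∈ spanningEdges ε}
end


/-! ### Auxiliary lemmas -/

section LaurentAux
open Polynomial

lemma one_add_T_eq' : (1 + T 1 : LaurentPolynomial ℤ) = Polynomial.toLaurent (1 + X) := by
  simp [map_add, Polynomial.toLaurent_X]

lemma toLaurent_apply_int' (p : Polynomial ℤ) (z : ℤ) :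
    (Polynomial.toLaurent p).coeff z = if 0 ≤ z then p.coeff z.toNat else 0 := by
  rw [LaurentPolynomial.coeff_toLaurent]
  split_ifs with h
  · conv_lhs => rw [show z = Nat.castEmbedding z.toNat from (Int.toNat_of_nonneg h).symm]
    rw [Finsupp.mapDomain_apply Nat.castEmbedding.injective]
    rfl
  · rw [Finsupp.mapDomain_notin_range]
    rintro ⟨m, rfl⟩
    simp at h

lemma neg_one_C' : (LaurentPolynomial.C (-1) : LaurentPolynomial ℤ) = -1 := by
  rw [map_neg, map_one]

lemma term_key' (a b : ℕ) :
    ((-T 1 - 1 : LaurentPolynomial ℤ) ^ a * (-T (-1) - 1) ^ b) =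
      LaurentPolynomial.C ((-1)^(a+b)) * (T (-(b:ℤ)) * (1 + T 1)^(a+b)) := by
  have h1 : (-T 1 - 1 : LaurentPolynomial ℤ) = LaurentPolynomial.C (-1) * (1 + T 1) := by
    rw [neg_one_C']; ring
  have hT : (T (-1) * (1 + T 1) : LaurentPolynomial ℤ) = 1 + T (-1) := by
    rw [mul_add, mul_one, ← T_add]
    norm_num [T_zero, add_comm]
  have h2 : (-T (-1) - 1 : LaurentPolynomial ℤ) =
      LaurentPolynomial.C (-1) * (T (-1) * (1 + T 1)) := by
    rw [hT, neg_one_C']; ring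
  rw [h1, h2, map_pow, show (-(b:ℤ)) = (b:ℤ) * -1 by ring, ← T_pow, mul_pow, mul_pow, mul_pow,
    pow_add, pow_add]
  ring

/-- The coefficient of `t^(n-2)` in `(-t-1)^a * (-1/t-1)^b`. -/
noncomputable def coeffTerm (n a b : ℕ) : ℤ :=
  (-1)^(a+b) * (if 0 ≤ ((n:ℤ)-2) + b then ((a+b).choose ((((n:ℤ)-2)+b).toNat) : ℤ) else 0)

lemma term_apply' (n a b : ℕ) :
    (((-T 1 - 1) ^ a * (-T (-1) - 1) ^ b : LaurentPolynomial ℤ)).coeff ((n:ℤ)-2) =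
      coeffTerm n a b := by
  rw [term_key', one_add_T_eq', ← map_pow, ← LaurentPolynomial.single_eq_C]
  rw [AddMonoidAlgebra.coeff_single_zero_mul]
  have hts : (T (-(b:ℤ)) : LaurentPolynomial ℤ) = AddMonoidAlgebra.single (-(b:ℤ)) 1 := rfl
  rw [hts, AddMonoidAlgebra.coeff_single_mul_apply, one_mul, toLaurent_apply_int', neg_neg]
  rw [show (b:ℤ) + ((n:ℤ)-2) = ((n:ℤ)-2) + b by ring]
  simp [coeffTerm, Polynomial.coeff_one_add_X_pow]

lemma coeffTerm_eq_zero {n k : ℕ} (b : ℕ) (hk1 : 1 ≤ k) (hk2 : k ≤ n - 2) :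
    coeffTerm n (k - 1) b = 0 := by
  rw [coeffTerm]
  split_ifs with h
  · rw [Nat.choose_eq_zero_of_lt (by omega)]
    simp
  · simp

lemma coeffTerm_empty {n : ℕ} (hn : 2 ≤ n) :
    coeffTerm n (n-1) 0 = (-1)^(n-1) * ((n:ℤ)-1) := by
  rw [coeffTerm, if_pos (by omega : (0:ℤ) ≤ ((n:ℤ)-2) + (0:ℕ))]
  simp only [Nat.cast_zero, add_zero, Nat.add_zero]
  rw [show ((n:ℤ)-2).toNat = n - 2 from by omega]
  rw [show n - 1 = (n-2)+1 from by omega, Nat.choose_succ_self_right]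
  rw [show (n-2)+1 = n-1 from by omega, Nat.cast_sub (by omega), Nat.cast_one]

lemma coeffTerm_single {n c : ℕ} (hn : 2 ≤ n) (hc : 1 ≤ c) :
    coeffTerm n ((n-1)-1) (c + (n-1) - n) = (-1)^(n-1) * (-1)^c := by
  have h1 : (n-1)-1 = n-2 := by omega
  have h2 : c + (n-1) - n = c - 1 := by omega
  rw [h1, h2, coeffTerm, if_pos (by omega : (0:ℤ) ≤ ((n:ℤ)-2) + ((c-1 : ℕ):ℤ))]
  rw [show (((n:ℤ)-2)+((c-1:ℕ):ℤ)).toNat = (n-2)+(c-1) from by omega]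
  rw [Nat.choose_self, Nat.cast_one, mul_one]
  have hexp : (n-1)+c = ((n-2)+(c-1))+2 := by omega
  calc (-1:ℤ)^((n-2)+(c-1)) = (-1)^(((n-2)+(c-1))+2) := by rw [pow_add (-1 : ℤ) ((n-2)+(c-1)) 2]; norm_num
    _ = (-1)^((n-1)+c) := by rw [hexp]
    _ = (-1)^(n-1)*(-1)^c := pow_add _ _ _

end LaurentAux

section GraphAux
open SimpleGraph

set_option linter.unusedSectionVars false

variable {V : Type*} [Fintype V] [DecidableEq V]

instance instNonemptyCC' [Nonempty V] (s : Set (Sym2 V)) :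
    Nonempty (SimpleGraph.fromEdgeSet s).ConnectedComponent :=
  ⟨(SimpleGraph.fromEdgeSet s).connectedComponentMk (Classical.arbitrary V)⟩

lemma numComponents_empty : numComponents V (∅ : Set (Sym2 V)) = Fintype.card V := by
  rw [numComponents, SimpleGraph.fromEdgeSet_empty, ← Nat.card_eq_fintype_card]
  refine (Nat.card_eq_of_bijective (⊥ : SimpleGraph V).connectedComponentMk
    ⟨fun x y h => ?_, fun c => c.exists_rep⟩).symm
  exact (SimpleGraph.reachable_bot).mp (SimpleGraph.ConnectedComponent.eq.mp h)

lemma numComponents_pos [Nonempty V] (s : Set (Sym2 V)) : 1 ≤ numComponents V s :=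
  Nat.one_le_iff_ne_zero.mpr (Nat.card_ne_zero.mpr ⟨inferInstance, inferInstance⟩)

lemma reachable_singleton {u v a b : V}
    (h : (SimpleGraph.fromEdgeSet {s(u,v)} : SimpleGraph V).Reachable a b) :
    a = b ∨ s(a,b) = s(u,v) := by
  obtain ⟨w⟩ := h
  induction w with
  | nil => exact Or.inl rfl
  | cons h p ih =>
    rename_i x y z
    rw [SimpleGraph.fromEdgeSet_adj] at h
    obtain ⟨he, hne⟩ := h
    simp only [Set.mem_singleton_iff] at he
    rcases ih with h2 | h2
    · rw [h2] at he; exact Or.inr he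
    · have h3 : s(x, y) = s(y, z) := by rw [he, h2]
      rw [Sym2.eq_iff] at h3
      rcases h3 with ⟨h4, h5⟩ | ⟨h4, h5⟩
      · exact (hne h4).elim
      · exact Or.inl h4

lemma numComponents_single {u v : V} (huv : u ≠ v) :
    numComponents V {s(u,v)} = Fintype.card V - 1 := by
  have hadj : (SimpleGraph.fromEdgeSet {s(u,v)} : SimpleGraph V).Adj u v := by
    rw [SimpleGraph.fromEdgeSet_adj]; exact ⟨rfl, huv⟩
  have hb : Function.Bijective
      (fun w : {w : V // w ≠ v} =>
        (SimpleGraph.fromEdgeSet {s(u,v)} : SimpleGraph V).connectedComponentMk w.1) := by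
    constructor
    · rintro ⟨x, hx⟩ ⟨y, hy⟩ h
      have h' := reachable_singleton (SimpleGraph.ConnectedComponent.eq.mp h)
      rcases h' with h' | h'
      · exact Subtype.ext h'
      · rw [Sym2.eq_iff] at h'
        rcases h' with ⟨h1, h2⟩ | ⟨h1, h2⟩
        · exact (hy h2).elim
        · exact (hx h1).elim
    · intro c
      obtain ⟨w, rfl⟩ := c.exists_rep
      by_cases hw : w = v
      · subst hw
        exact ⟨⟨u, huv⟩, SimpleGraph.ConnectedComponent.connectedComponentMk_eq_of_adj hadj⟩
      · exact ⟨⟨w, hw⟩, rfl⟩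
  have hc := Nat.card_eq_of_bijective _ hb
  rw [numComponents, ← hc, Nat.card_eq_fintype_card]
  simp [Fintype.card_subtype_compl]

lemma numComponents_single' {e : Sym2 V} (he : ¬ e.IsDiag) :
    numComponents V {e} = Fintype.card V - 1 := by
  induction e using Sym2.ind with
  | _ u v => exact numComponents_single (by rwa [Sym2.mk_isDiag_iff] at he)

lemma numComponents_le_aux {s : Set (Sym2 V)} {a b c d : V}
    (hab : a ≠ b) (hcd : c ≠ d) (h1 : s(a,b) ∈ s) (h2 : s(c,d) ∈ s)
    (hac : a ≠ c) (had : a ≠ d) :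
    numComponents V s ≤ Fintype.card V - 2 := by
  set G := (SimpleGraph.fromEdgeSet s : SimpleGraph V) with hG
  have hadj1 : G.connectedComponentMk a = G.connectedComponentMk b :=
    SimpleGraph.ConnectedComponent.connectedComponentMk_eq_of_adj
      (by rw [hG, SimpleGraph.fromEdgeSet_adj]; exact ⟨h1, hab⟩)
  have hadj2 : G.connectedComponentMk c = G.connectedComponentMk d :=
    SimpleGraph.ConnectedComponent.connectedComponentMk_eq_of_adj
      (by rw [hG, SimpleGraph.fromEdgeSet_adj]; exact ⟨h2, hcd⟩)
  have key : ∀ q : G.ConnectedComponent,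
      ∃ w : V, G.connectedComponentMk w = q ∧ w ≠ a ∧ w ≠ c := by
    intro q
    obtain ⟨w0, rfl⟩ := q.exists_rep
    by_cases hwa : w0 = a
    · subst hwa
      by_cases hbc : b = c
      · exact ⟨d, by rw [← hadj2, ← hbc, ← hadj1]; rfl, fun h => had h.symm,
          fun h => hcd h.symm⟩
      · exact ⟨b, hadj1.symm, fun h => hab h.symm, hbc⟩
    · by_cases hwc : w0 = c
      · subst hwc
        exact ⟨d, hadj2.symm, fun h => had h.symm, fun h => hcd h.symm⟩
      · exact ⟨w0, rfl, hwa, hwc⟩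
  have hinj : Function.Injective
      (fun q : G.ConnectedComponent => (⟨(key q).choose, (key q).choose_spec.2⟩ :
        {w : V // w ≠ a ∧ w ≠ c})) := by
    intro q1 q2 h
    have e1 := (key q1).choose_spec.1
    have e2 := (key q2).choose_spec.1
    rw [← e1, ← e2]
    simp only [Subtype.mk.injEq] at h
    rw [h]
  have hle := Nat.card_le_card_of_injective _ hinj
  have hcard : Nat.card {w : V // w ≠ a ∧ w ≠ c} = Fintype.card V - 2 := by
    rw [Nat.card_eq_fintype_card, Fintype.card_subtype]
    have heq : (univ.filter fun w : V => w ≠ a ∧ w ≠ c) = univ \ {a, c} := by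
      ext w; simp [and_comm]
    rw [heq, Finset.card_sdiff_of_subset (Finset.subset_univ _), Finset.card_univ]
    rw [Finset.card_insert_of_notMem (by simp [hac]), Finset.card_singleton]
  rw [numComponents, ← hG]
  omega

lemma numComponents_le_two_edges {s : Set (Sym2 V)} {e1 e2 : Sym2 V}
    (h1 : e1 ∈ s) (h2 : e2 ∈ s) (hne : e1 ≠ e2)
    (hd1 : ¬ e1.IsDiag) (hd2 : ¬ e2.IsDiag) :
    numComponents V s ≤ Fintype.card V - 2 := by
  induction e1 using Sym2.ind with
  | _ a b =>
  induction e2 using Sym2.ind with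
  | _ c d =>
  rw [Sym2.mk_isDiag_iff] at hd1 hd2
  by_cases hax : a ≠ c ∧ a ≠ d
  · exact numComponents_le_aux hd1 hd2 h1 h2 hax.1 hax.2
  · push_neg at hax
    have hor : a = c ∨ a = d := by
      by_cases h : a = c
      · exact Or.inl h
      · exact Or.inr (hax h)
    by_cases hbx : b ≠ c ∧ b ≠ d
    · have h1' : s(b,a) ∈ s := by rwa [Sym2.eq_swap]
      exact numComponents_le_aux (Ne.symm hd1) hd2 h1' h2 hbx.1 hbx.2
    · exfalso
      push_neg at hbx
      have hor2 : b = c ∨ b = d := by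
        by_cases h : b = c
        · exact Or.inl h
        · exact Or.inr (hbx h)
      rcases hor with h1' | h1' <;> rcases hor2 with h2' | h2'
      · exact hd1 (h1'.trans h2'.symm)
      · exact hne (by rw [h1', h2'])
      · exact hne (by rw [h1', h2', Sym2.eq_swap])
      · exact hd1 (h1'.trans h2'.symm)

lemma numComponents_insert_le (x : Sym2 V) (s : Set (Sym2 V)) :
    numComponents V s ≤ numComponents V (insert x s) + 1 := by
  classical
  induction x using Sym2.ind with
  | _ u v =>
  set G := (SimpleGraph.fromEdgeSet s : SimpleGraph V) with hGdef
  set G' := (SimpleGraph.fromEdgeSet (insert s(u,v) s) : SimpleGraph V) with hG'def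
  have hle : G ≤ G' := SimpleGraph.fromEdgeSet_mono (Set.subset_insert _ _)
  have reach : ∀ p q : V, G'.Reachable p q →
      G.connectedComponentMk p = G.connectedComponentMk q ∨
      ((G.connectedComponentMk p = G.connectedComponentMk u ∨
        G.connectedComponentMk p = G.connectedComponentMk v) ∧
       (G.connectedComponentMk q = G.connectedComponentMk u ∨
        G.connectedComponentMk q = G.connectedComponentMk v)) := by
    intro p q h
    obtain ⟨w⟩ := h
    induction w with
    | nil => exact Or.inl rfl
    | cons h pth ih =>
      rename_i x y z
      rw [hG'def, SimpleGraph.fromEdgeSet_adj, Set.mem_insert_iff] at h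
      obtain ⟨he, hxy⟩ := h
      have hstep : G.connectedComponentMk x = G.connectedComponentMk y ∨
          ((G.connectedComponentMk x = G.connectedComponentMk u ∨
            G.connectedComponentMk x = G.connectedComponentMk v) ∧
           (G.connectedComponentMk y = G.connectedComponentMk u ∨
            G.connectedComponentMk y = G.connectedComponentMk v)) := by
        rcases he with he | he
        · rw [Sym2.eq_iff] at he
          rcases he with ⟨hx, hy⟩ | ⟨hx, hy⟩
          · exact Or.inr ⟨Or.inl (by rw [hx]), Or.inr (by rw [hy])⟩
          · exact Or.inr ⟨Or.inr (by rw [hx]), Or.inl (by rw [hy])⟩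
        · exact Or.inl (SimpleGraph.ConnectedComponent.connectedComponentMk_eq_of_adj
            (by rw [hGdef, SimpleGraph.fromEdgeSet_adj]; exact ⟨he, hxy⟩))
      rcases hstep with h1 | h1 <;> rcases ih with h2 | h2
      · exact Or.inl (h1.trans h2)
      · exact Or.inr ⟨by rw [h1]; exact h2.1, h2.2⟩
      · exact Or.inr ⟨h1.1, by rw [← h2]; exact h1.2⟩
      · exact Or.inr ⟨h1.1, h2.2⟩
  have hinj : Function.Injective (fun q : G.ConnectedComponent =>
      if q = G.connectedComponentMk v then (none : Option G'.ConnectedComponent)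
      else some (q.map (SimpleGraph.Hom.ofLE hle))) := by
    intro q1 q2 h
    simp only [] at h
    by_cases hq1 : q1 = G.connectedComponentMk v
    · by_cases hq2 : q2 = G.connectedComponentMk v
      · rw [hq1, hq2]
      · rw [if_pos hq1, if_neg hq2] at h
        exact absurd h (by simp)
    · by_cases hq2 : q2 = G.connectedComponentMk v
      · rw [if_neg hq1, if_pos hq2] at h
        exact absurd h (by simp)
      · rw [if_neg hq1, if_neg hq2] at h
        simp only [Option.some.injEq] at h
        obtain ⟨p, rfl⟩ := q1.exists_rep
        obtain ⟨r, rfl⟩ := q2.exists_rep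
        have hmap : G'.connectedComponentMk p = G'.connectedComponentMk r := by
          have h1 := SimpleGraph.ConnectedComponent.map_mk
            (SimpleGraph.Hom.ofLE hle) p
          have h2 := SimpleGraph.ConnectedComponent.map_mk
            (SimpleGraph.Hom.ofLE hle) r
          rw [show (Quot.mk G.Reachable p : G.ConnectedComponent) =
              G.connectedComponentMk p from rfl,
            show (Quot.mk G.Reachable r : G.ConnectedComponent) =
              G.connectedComponentMk r from rfl] at h
          rw [h1, h2] at h
          exact h
        have hre := reach p r (SimpleGraph.ConnectedComponent.eq.mp hmap)
        rcases hre with h' | ⟨hp, hr⟩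
        · exact h'
        · have hp' : G.connectedComponentMk p = G.connectedComponentMk u := by
            rcases hp with hp | hp
            · exact hp
            · exact absurd hp hq1
          have hr' : G.connectedComponentMk r = G.connectedComponentMk u := by
            rcases hr with hr | hr
            · exact hr
            · exact absurd hr hq2
          exact hp'.trans hr'.symm
  have hle2 := Nat.card_le_card_of_injective _ hinj
  rw [Finite.card_option] at hle2
  exact hle2

lemma card_le_numComponents_add_card (s : Finset (Sym2 V)) :
    Fintype.card V ≤ numComponents V ↑s + s.card := by
  classical
  induction s using Finset.induction_on with
  | empty => simp [numComponents_empty]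
  | insert x t h ih =>
    rw [Finset.card_insert_of_notMem h, Finset.coe_insert]
    have := numComponents_insert_le x ↑t
    omega

end GraphAux

/-- For a connected loopless multigraph with spanning simple graph
edge set `Ẽ`, the coefficient of `t^(|V|-2)` in `T_G(-t,-1/t)` equals
`(-1)^(|V|-1) * (|V| - 1 - |Ẽ|)`; in particular its absolute value is `|Ẽ| + 1 - |V|`. -/
theorem tutteEval_second_coeff {V E : Type*} [Fintype V] [DecidableEq V] [Fintype E]
    (ε : E → Sym2 V)
    (hloopless : ∀ f : E, ¬ (ε f).IsDiag)
    (hconn : numComponents V (Set.range ε) = 1) :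
    (tutteEval ε).coeff ((Fintype.card V : ℤ) - 2) =
        (-1) ^ (Fintype.card V - 1) *
          ((Fintype.card V : ℤ) - 1 - (spanningEdges ε).card) ∧
      |(tutteEval ε).coeff ((Fintype.card V : ℤ) - 2)| =
        ((spanningEdges ε).card : ℤ) + 1 - Fintype.card V := by
  classical
  have hV : Nonempty V := by
    by_contra h
    rw [not_nonempty_iff] at h
    have hcc : IsEmpty (SimpleGraph.fromEdgeSet (Set.range ε)).ConnectedComponent := by
      constructor
      intro c
      obtain ⟨v, _⟩ := c.exists_rep
      exact h.elim v
    rw [numComponents, Nat.card_of_isEmpty] at hconn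
    exact absurd hconn.symm one_ne_zero
  set n := Fintype.card V with hn
  have hn1 : 1 ≤ n := Fintype.card_pos
  have hrange : Set.range ε = ↑(spanningEdges ε) := by
    rw [spanningEdges, Finset.coe_image, Finset.coe_univ, Set.image_univ]
  have hedge : n ≤ 1 + (spanningEdges ε).card := by
    have h := card_le_numComponents_add_card (spanningEdges ε)
    rw [← hrange, hconn] at h
    omega
  have happ : (tutteEval ε).coeff ((n:ℤ)-2) = ∑ F : Finset E,
      coeffTerm n (numComponents V (ε '' ↑F) - 1)
        (F.card + numComponents V (ε '' ↑F) - n) := by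
    rw [tutteEval, hconn, AddMonoidAlgebra.coeff_sum, Finset.sum_apply']
    exact Finset.sum_congr rfl fun F _ => term_apply' n _ _
  have hmain : (tutteEval ε).coeff ((n:ℤ) - 2) =
      (-1)^(n-1) * ((n:ℤ) - 1 - (spanningEdges ε).card) := by
    rcases eq_or_lt_of_le hn1 with h1 | hn2
    · -- n = 1
      have hsub : Subsingleton V := by
        rw [← Fintype.card_le_one_iff_subsingleton]
        omega
      have hE : IsEmpty E := by
        constructor
        intro f
        apply hloopless f
        induction ε f using Sym2.ind with
        | _ x y => rw [Sym2.mk_isDiag_iff]; exact Subsingleton.elim x y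
      have huniv : (univ : Finset (Finset E)) = {∅} := by
        ext F
        simp only [Finset.mem_univ, Finset.mem_singleton, true_iff]
        exact Finset.eq_empty_of_isEmpty F
      have hspan : spanningEdges ε = ∅ := by
        rw [spanningEdges, Finset.univ_eq_empty, Finset.image_empty]
      rw [happ, huniv, Finset.sum_singleton]
      have himg : ε '' (↑(∅ : Finset E)) = ∅ := by simp
      rw [himg, numComponents_empty, hspan, Finset.card_empty, Finset.card_empty, ← hn, ← h1]
      norm_num [coeffTerm]
    · -- 2 ≤ n
      have hn2' : 2 ≤ n := hn2
      set P : Finset E → Prop := fun F => (F.image ε).card ≤ 1 with hP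
      set g : Finset E → ℤ := fun F =>
        coeffTerm n (numComponents V (ε '' ↑F) - 1)
          (F.card + numComponents V (ε '' ↑F) - n) with hg
      have e1 : ∑ F : Finset E, g F =
          ∑ F ∈ univ.filter P, g F + ∑ F ∈ univ.filter (fun F => ¬ P F), g F :=
        (Finset.sum_filter_add_sum_filter_not _ _ _).symm
      have e2 : ∑ F ∈ univ.filter (fun F => ¬ P F), g F = 0 := by
        apply Finset.sum_eq_zero
        intro F hF
        rw [Finset.mem_filter] at hF
        have h1lt : 1 < (F.image ε).card := by
          have := hF.2
          rw [hP] at this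
          omega
        obtain ⟨x1, hx1, x2, hx2, hxne⟩ := Finset.one_lt_card.mp h1lt
        obtain ⟨f1, _, hf1⟩ := Finset.mem_image.mp hx1
        obtain ⟨f2, _, hf2⟩ := Finset.mem_image.mp hx2
        have himg : ε '' ↑F = ↑(F.image ε) := (Finset.coe_image).symm
        have hk2 : numComponents V (ε '' ↑F) ≤ n - 2 := by
          rw [himg]
          exact numComponents_le_two_edges (Finset.mem_coe.mpr hx1)
            (Finset.mem_coe.mpr hx2) hxne
            (by rw [← hf1]; exact hloopless f1) (by rw [← hf2]; exact hloopless f2)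
        have hk1 : 1 ≤ numComponents V (ε '' ↑F) := numComponents_pos _
        rw [hg]
        exact coeffTerm_eq_zero _ hk1 hk2
      have e3 : ∑ F ∈ univ.filter P, g F =
          ∑ F ∈ (univ.filter P).filter (fun F => F = ∅), g F +
          ∑ F ∈ (univ.filter P).filter (fun F => ¬ F = ∅), g F :=
        (Finset.sum_filter_add_sum_filter_not _ _ _).symm
      have e4 : (univ.filter P).filter (fun F => F = ∅) = ({∅} : Finset (Finset E)) := by
        ext F
        simp only [Finset.mem_filter, Finset.mem_univ, true_and, Finset.mem_singleton]
        constructor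
        · exact fun h => h.2
        · intro h
          subst h
          exact ⟨by rw [hP]; simp, rfl⟩
      have e5 : g ∅ = (-1)^(n-1) * ((n:ℤ)-1) := by
        rw [hg]
        simp only [Finset.coe_empty, Set.image_empty, Finset.card_empty]
        rw [numComponents_empty, ← hn]
        rw [show 0 + n - n = 0 from by omega]
        exact coeffTerm_empty hn2'
      have e6 : (univ.filter P).filter (fun F => ¬ F = ∅) =
          (spanningEdges ε).biUnion
            (fun e => ((univ.filter (fun f => ε f = e)).powerset).erase ∅) := by
        ext F
        simp only [Finset.mem_filter, Finset.mem_univ, true_and, Finset.mem_biUnion,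
          Finset.mem_erase, Finset.mem_powerset]
        constructor
        · rintro ⟨hle, hne⟩
          obtain ⟨f, hf⟩ := Finset.nonempty_iff_ne_empty.mpr hne
          refine ⟨ε f, ?_, hne, ?_⟩
          · rw [spanningEdges]
            exact Finset.mem_image.mpr ⟨f, Finset.mem_univ f, rfl⟩
          · intro f' hf'
            rw [Finset.mem_filter]
            refine ⟨Finset.mem_univ f', ?_⟩
            rw [hP] at hle
            exact Finset.card_le_one.mp hle _ (Finset.mem_image_of_mem ε hf')
              _ (Finset.mem_image_of_mem ε hf)
        · rintro ⟨e, _, hne, hsub⟩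
          refine ⟨?_, hne⟩
          rw [hP]
          have himg : F.image ε ⊆ {e} := by
            intro x hx
            obtain ⟨f, hf, hfx⟩ := Finset.mem_image.mp hx
            rw [Finset.mem_singleton, ← hfx]
            exact (Finset.mem_filter.mp (hsub hf)).2
          calc (F.image ε).card ≤ ({e} : Finset (Sym2 V)).card := Finset.card_le_card himg
            _ = 1 := Finset.card_singleton e
      have hdisj : (↑(spanningEdges ε) : Set (Sym2 V)).PairwiseDisjoint
          (fun e => ((univ.filter (fun f => ε f = e)).powerset).erase ∅) := by
        intro x1 _ x2 _ hxne
        rw [Function.onFun, Finset.disjoint_left]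
        intro F hF1 hF2
        rw [Finset.mem_erase, Finset.mem_powerset] at hF1 hF2
        obtain ⟨f, hf⟩ := Finset.nonempty_iff_ne_empty.mpr hF1.1
        exact hxne (((Finset.mem_filter.mp (hF1.2 hf)).2).symm.trans
          (Finset.mem_filter.mp (hF2.2 hf)).2)
      have e7 : ∀ e ∈ spanningEdges ε,
          ∑ F ∈ ((univ.filter (fun f => ε f = e)).powerset).erase ∅, g F =
            -(-1:ℤ)^(n-1) := by
        intro e he
        obtain ⟨f0, _, hf0⟩ := Finset.mem_image.mp (by rwa [spanningEdges] at he)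
        have hdiag : ¬ e.IsDiag := by rw [← hf0]; exact hloopless f0
        have hterm : ∀ F ∈ ((univ.filter (fun f => ε f = e)).powerset).erase ∅,
            g F = (-1:ℤ)^(n-1) * (-1)^F.card := by
          intro F hF
          rw [Finset.mem_erase, Finset.mem_powerset] at hF
          obtain ⟨f, hf⟩ := Finset.nonempty_iff_ne_empty.mpr hF.1
          have himg : ε '' ↑F = {e} := by
            apply Set.eq_singleton_iff_unique_mem.mpr
            constructor
            · exact ⟨f, hf, (Finset.mem_filter.mp (hF.2 hf)).2⟩
            · rintro x ⟨f', hf', rfl⟩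
              exact (Finset.mem_filter.mp (hF.2 hf')).2
          rw [hg]
          simp only
          rw [himg, numComponents_single' hdiag, ← hn]
          exact coeffTerm_single hn2' (Finset.card_pos.mpr ⟨f, hf⟩)
        rw [Finset.sum_congr rfl hterm]
        have hpow : ∑ F ∈ (univ.filter (fun f => ε f = e)).powerset,
            (-1:ℤ)^(n-1) * (-1)^F.card = 0 := by
          rw [← Finset.mul_sum, Finset.sum_powerset_neg_one_pow_card_of_nonempty
            ⟨f0, Finset.mem_filter.mpr ⟨Finset.mem_univ f0, hf0⟩⟩, mul_zero]
        have hsplit := Finset.sum_erase_add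
          ((univ.filter (fun f => ε f = e)).powerset)
          (fun F : Finset E => (-1:ℤ)^(n-1) * (-1)^F.card)
          (Finset.empty_mem_powerset _)
        rw [hpow] at hsplit
        have : (fun F : Finset E => (-1:ℤ)^(n-1) * (-1)^F.card) ∅ = (-1:ℤ)^(n-1) := by
          simp
        simp only [Finset.card_empty, pow_zero, mul_one] at hsplit
        linarith
      have e8 : ∑ F ∈ (spanningEdges ε).biUnion
            (fun e => ((univ.filter (fun f => ε f = e)).powerset).erase ∅), g F =
          ∑ e ∈ spanningEdges ε,
            ∑ F ∈ ((univ.filter (fun f => ε f = e)).powerset).erase ∅, g F :=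
        Finset.sum_biUnion hdisj
      have e9 : ∑ e ∈ spanningEdges ε,
          ∑ F ∈ ((univ.filter (fun f => ε f = e)).powerset).erase ∅, g F =
          ((spanningEdges ε).card : ℤ) * (-(-1:ℤ)^(n-1)) := by
        rw [Finset.sum_congr rfl e7, Finset.sum_const, nsmul_eq_mul]
      rw [happ]
      have hfinal : ∑ F : Finset E, g F =
          (-1)^(n-1) * ((n:ℤ)-1) + ((spanningEdges ε).card : ℤ) * (-(-1:ℤ)^(n-1)) := by
        rw [e1, e2, e3, e4, Finset.sum_singleton, e5, e6, e8, e9]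
        ring
      rw [← hg] at *
      rw [hfinal]
      ring
  refine ⟨hmain, ?_⟩
  rw [hmain, abs_mul, abs_pow, abs_neg, abs_one, one_pow, one_mul,
    abs_of_nonpos (by omega : (n:ℤ) - 1 - ((spanningEdges ε).card : ℤ) ≤ 0)]
  ring
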